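/- Let S be an infinite set and f a function assigning to each nonprincipal ultrafilter 𝒰 on S a set f(𝒰) ∈ 𝒰. Then there are finitely many nonprincipal ultrafilters 𝒰₁, …, 𝒰_n on S such that S \ (f(𝒰₁) ∪ ⋯ ∪ f(𝒰_n)) is finite. -/

import Mathlib

open Set

theorem stmt12 (S : Type*) [Infinite S] (f : Ultrafilter S → Set S)
    (hf : ∀ 𝒰 : Ultrafilter S, (∀ a : S, 𝒰 ≠ pure a) → f 𝒰 ∈ 𝒰) :
    ∃ T : Finset (Ultrafilter S), (∀ 𝒰 ∈ T, ∀ a : S, 𝒰 ≠ pure a) ∧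
      (Set.univ \ ⋃ 𝒰 ∈ T, f 𝒰).Finite := by
  classical
  by_contra hcon
  push_neg at hcon
  set sg : Set (Set S) :=
    {A | Aᶜ.Finite} ∪ ((fun 𝒰 => (f 𝒰)ᶜ) '' {𝒰 : Ultrafilter S | ∀ a : S, 𝒰 ≠ pure a})
    with hsg
  have hne : (Filter.generate sg).NeBot := by
    rw [Filter.generate_neBot_iff]
    intro t hts htfin
    -- extract the finset of ultrafilters involved
    have hU : ∃ U : Finset (Ultrafilter S), (∀ 𝒰 ∈ U, ∀ a : S, 𝒰 ≠ pure a) ∧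
        ∀ A ∈ t, Aᶜ.Finite ∨ ∃ 𝒰 ∈ U, A = (f 𝒰)ᶜ := by
      clear hcon
      revert hts
      refine Set.Finite.induction_on _ htfin (fun _ => ⟨∅, by simp, by simp⟩) ?_
      intro A t' hA ht' ih hts
      obtain ⟨U, hU1, hU2⟩ := ih (fun B hB => hts (Set.mem_insert_of_mem _ hB))
      have hAs : A ∈ sg := hts (Set.mem_insert _ _)
      rcases hAs with h1 | ⟨𝒰, h𝒰, rfl⟩
      · exact ⟨U, hU1, fun B hB => by
          rcases Set.mem_insert_iff.1 hB with rfl | hB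
          · exact Or.inl h1
          · exact hU2 B hB⟩
      · refine ⟨insert 𝒰 U, ?_, ?_⟩
        · intro 𝒱 h𝒱 a
          rcases Finset.mem_insert.1 h𝒱 with rfl | h𝒱
          · exact h𝒰 a
          · exact hU1 𝒱 h𝒱 a
        · intro B hB
          rcases Set.mem_insert_iff.1 hB with rfl | hB
          · exact Or.inr ⟨𝒰, Finset.mem_insert_self _ _, rfl⟩
          · rcases hU2 B hB with h | ⟨𝒲, h𝒲, h⟩
            · exact Or.inl h
            · exact Or.inr ⟨𝒲, Finset.mem_insert_of_mem h𝒲, h⟩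
    obtain ⟨U, hU1, hU2⟩ := hU
    set B : Set S := Set.univ \ ⋃ 𝒰 ∈ U, f 𝒰 with hB
    have hBinf : B.Infinite := fun h => hcon U hU1 h
    set N : Set S := ⋃₀ (compl '' (t ∩ {A | Aᶜ.Finite})) with hN
    have hNfin : N.Finite := by
      apply Set.Finite.sUnion
      · exact (htfin.inter_of_left _).image _
      · rintro C ⟨A, ⟨-, hA⟩, rfl⟩
        exact hA
    have hsub : B \ N ⊆ ⋂₀ t := by
      rintro x ⟨hxB, hxN⟩ A hA
      rcases hU2 A hA with hfin | ⟨𝒰, h𝒰, rfl⟩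
      · by_contra hx
        exact hxN ⟨Aᶜ, ⟨A, ⟨hA, hfin⟩, rfl⟩, hx⟩
      · intro hx
        exact hxB.2 (Set.mem_biUnion h𝒰 hx)
    exact ((hBinf.diff hNfin).mono hsub).nonempty
  obtain ⟨𝒱, h𝒱⟩ := Ultrafilter.exists_le (Filter.generate sg)
  have hcof : ∀ A : Set S, Aᶜ.Finite → A ∈ 𝒱 := fun A hA =>
    h𝒱 (Filter.mem_generate_of_mem (Or.inl hA))
  have hnp : ∀ a : S, 𝒱 ≠ pure a := by
    intro a ha
    have h1 : ({a}ᶜ : Set S) ∈ 𝒱 := hcof _ (by simp)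
    have h2 : ({a} : Set S) ∈ 𝒱 := by rw [ha]; exact rfl
    exact absurd (𝒱.toFilter.inter_sets h2 h1) (by simp [Filter.empty_notMem 𝒱.toFilter])
  have h1 : (f 𝒱)ᶜ ∈ 𝒱 := h𝒱 (Filter.mem_generate_of_mem (Or.inr ⟨𝒱, hnp, rfl⟩))
  exact absurd (𝒱.toFilter.inter_sets (hf 𝒱 hnp) h1) (by simp [Filter.empty_notMem 𝒱.toFilter])
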